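/- For every a ∈ ℂ, the translation operator f(z) ↦ f(z+a) on polynomials of degree at most 2n is orthogonal with respect to the bilinear form; that is, ⟨f(z+a), g(z+a)⟩ = ⟨f, g⟩ for all f, g. -/

import Mathlib

open Polynomial

noncomputable def formB (n : ℕ) (f g : Polynomial ℂ) : ℂ :=
  ∑ m ∈ Finset.range (2 * n + 1),
    (-1 : ℂ) ^ m * ((m.factorial : ℂ) * f.coeff m) *
      (((2 * n - m).factorial : ℂ) * g.coeff (2 * n - m))

lemma formB_sum_left (n : ℕ) {ι : Type*} (s : Finset ι) (F : ι → Polynomial ℂ)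
    (g : Polynomial ℂ) :
    formB n (∑ i ∈ s, F i) g = ∑ i ∈ s, formB n (F i) g := by
  simp only [formB, finset_sum_coeff, Finset.mul_sum, Finset.sum_mul]
  exact Finset.sum_comm

lemma formB_sum_right (n : ℕ) {ι : Type*} (s : Finset ι) (F : ι → Polynomial ℂ)
    (g : Polynomial ℂ) :
    formB n g (∑ i ∈ s, F i) = ∑ i ∈ s, formB n g (F i) := by
  simp only [formB, finset_sum_coeff, Finset.mul_sum, Finset.sum_mul]
  exact Finset.sum_comm

lemma formB_smul_left (n : ℕ) (c : ℂ) (p g : Polynomial ℂ) :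
    formB n (c • p) g = c * formB n p g := by
  simp only [formB, coeff_smul, smul_eq_mul, Finset.mul_sum]
  exact Finset.sum_congr rfl fun m _ => by ring

lemma formB_smul_right (n : ℕ) (c : ℂ) (p g : Polynomial ℂ) :
    formB n g (c • p) = c * formB n g p := by
  simp only [formB, coeff_smul, smul_eq_mul, Finset.mul_sum]
  exact Finset.sum_congr rfl fun m _ => by ring

lemma formB_skew (n : ℕ) {f g : Polynomial ℂ} (hf : f.natDegree ≤ 2 * n)
    (hg : g.natDegree ≤ 2 * n) :
    formB n (derivative f) g = - formB n f (derivative g) := by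
  have key : formB n (derivative f) g + formB n f (derivative g) = 0 := by
    set u : ℕ → ℂ := fun m => (-1 : ℂ) ^ m * ((m.factorial : ℂ) * f.coeff m) *
      (((2 * n + 1 - m).factorial : ℂ) * g.coeff (2 * n + 1 - m)) with hu
    have h1 : formB n (derivative f) g = ∑ m ∈ Finset.range (2 * n + 1), -u (m + 1) := by
      refine Finset.sum_congr rfl fun m hm => ?_
      simp only [hu, coeff_derivative]
      have h4 : 2 * n + 1 - (m + 1) = 2 * n - m := by omega
      rw [h4]
      push_cast [Nat.factorial_succ]
      ring
    have h2 : formB n f (derivative g) = ∑ m ∈ Finset.range (2 * n + 1), u m := by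
      refine Finset.sum_congr rfl fun m hm => ?_
      simp only [Finset.mem_range] at hm
      simp only [hu, coeff_derivative]
      have h3 : 2 * n + 1 - m = (2 * n - m) + 1 := by omega
      rw [h3]
      push_cast [Nat.factorial_succ]
      ring
    rw [h1, h2, ← Finset.sum_add_distrib]
    have hc : ∀ m ∈ Finset.range (2 * n + 1), -u (m + 1) + u m = u m - u (m + 1) :=
      fun m _ => by ring
    rw [Finset.sum_congr rfl hc, Finset.sum_range_sub']
    have hg' : g.coeff (2 * n + 1) = 0 := coeff_eq_zero_of_natDegree_lt (by omega)
    have hf' : f.coeff (2 * n + 1) = 0 := coeff_eq_zero_of_natDegree_lt (by omega)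
    simp [hu, hf', hg']
  linear_combination key

lemma formB_skew_iter (n : ℕ) (i : ℕ) :
    ∀ (f g : Polynomial ℂ), f.natDegree ≤ 2 * n → g.natDegree ≤ 2 * n →
      formB n (derivative^[i] f) g = (-1 : ℂ) ^ i * formB n f (derivative^[i] g) := by
  induction i with
  | zero => intro f g _ _; simp
  | succ i ih =>
    intro f g hf hg
    have hdf : (derivative f).natDegree ≤ 2 * n :=
      le_trans (natDegree_derivative_le f) (by omega)
    have hdg : (derivative^[i] g).natDegree ≤ 2 * n := by
      have := Polynomial.natDegree_iterate_derivative g i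
      omega
    rw [Function.iterate_succ_apply, ih (derivative f) g hdf hg,
      formB_skew n hf hdg, Function.iterate_succ_apply']
    ring

lemma natDegree_iter_deriv_le (p : Polynomial ℂ) (i : ℕ) :
    (derivative^[i] p).natDegree ≤ p.natDegree := by
  have := Polynomial.natDegree_iterate_derivative p i
  omega

lemma taylor_expand (n : ℕ) (b : ℂ) (p : Polynomial ℂ) (hp : p.natDegree ≤ 2 * n) :
    p.comp (X + C b) =
      ∑ i ∈ Finset.range (2 * n + 1),
        (b ^ i * ((i.factorial : ℂ))⁻¹) • derivative^[i] p := by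
  ext m
  have hd : (hasseDeriv m p).natDegree < 2 * n + 1 :=
    lt_of_le_of_lt (le_trans (natDegree_hasseDeriv_le p m) (Nat.sub_le _ _)) (by omega)
  rw [← taylor_apply, taylor_coeff, Polynomial.eval_eq_sum_range' hd, finset_sum_coeff]
  refine Finset.sum_congr rfl fun i hi => ?_
  have hder : derivative^[i] p = i.factorial • hasseDeriv i p := by
    rw [← Polynomial.factorial_smul_hasseDeriv]; rfl
  rw [coeff_smul, hder, hasseDeriv_coeff, Polynomial.coeff_smul, hasseDeriv_coeff]
  have hch : ((i + m).choose m : ℂ) = ((m + i).choose i : ℂ) := by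
    norm_cast
    rw [add_comm i m, ← Nat.choose_symm (Nat.le_add_left i m)]
    congr 1
    omega
  have hco : p.coeff (i + m) = p.coeff (m + i) := by rw [add_comm]
  have hfac : (i.factorial : ℂ) ≠ 0 := Nat.cast_ne_zero.mpr (Nat.factorial_ne_zero i)
  simp only [smul_eq_mul, nsmul_eq_mul]
  rw [hch, hco]
  field_simp

theorem formB_translation_orthogonal (n : ℕ) (hn : 0 < n) (a : ℂ)
    (f g : Polynomial ℂ) (hf : f ∈ Polynomial.degreeLE ℂ (2 * n))
    (hg : g ∈ Polynomial.degreeLE ℂ (2 * n)) :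
    formB n (f.comp (X + C a)) (g.comp (X + C a)) = formB n f g := by
  have hf' : f.natDegree ≤ 2 * n := natDegree_le_iff_degree_le.mpr (mem_degreeLE.mp hf)
  have hg' : g.natDegree ≤ 2 * n := natDegree_le_iff_degree_le.mpr (mem_degreeLE.mp hg)
  have hTg : (g.comp (X + C a)).natDegree ≤ 2 * n := by
    rw [natDegree_comp, natDegree_X_add_C, mul_one]; exact hg'
  have hcomm : ∀ (i : ℕ) (p : Polynomial ℂ),
      derivative^[i] (p.comp (X + C a)) = (derivative^[i] p).comp (X + C a) := by
    intro i
    induction i with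
    | zero => intro p; rfl
    | succ i ih =>
      intro p
      rw [Function.iterate_succ_apply', ih p, derivative_comp]
      simp only [derivative_add, derivative_X, derivative_C, add_zero, one_mul]
      rw [show derivative ((⇑derivative)^[i] p) = (⇑derivative)^[i+1] p from
        (Function.iterate_succ_apply' derivative i p).symm]
  rw [taylor_expand n a f hf', formB_sum_left]
  have step : ∀ i ∈ Finset.range (2 * n + 1),
      formB n ((a ^ i * ((i.factorial : ℂ))⁻¹) • derivative^[i] f) (g.comp (X + C a)) =
        formB n f (((-a) ^ i * ((i.factorial : ℂ))⁻¹) •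
          ((derivative^[i] g).comp (X + C a))) := by
    intro i _
    rw [formB_smul_left, formB_skew_iter n i f (g.comp (X + C a)) hf' hTg, hcomm i g,
      formB_smul_right]
    ring
  rw [Finset.sum_congr rfl step, ← formB_sum_right]
  congr 1
  have hsum : ∑ i ∈ Finset.range (2 * n + 1),
      ((-a) ^ i * ((i.factorial : ℂ))⁻¹) • ((derivative^[i] g).comp (X + C a)) =
      (∑ i ∈ Finset.range (2 * n + 1),
        ((-a) ^ i * ((i.factorial : ℂ))⁻¹) • derivative^[i] g).comp (X + C a) := by
    rw [Polynomial.sum_comp]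
    exact Finset.sum_congr rfl fun i _ => (smul_comp _ _ _).symm
  rw [hsum, ← taylor_expand n (-a) g hg', comp_assoc]
  simp [← C_add]
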